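/- Let R be a finite chain ring, f ∈ R[x], and a, m ∈ R with m² = 0. Then f(a + m) = f(a) + λ_f(a, m), where λ_f(a,m) = Σ_{j≥1} Σ_{r=1}^j a_j a^{r-1} m a^{j-r} for f = Σ a_j x^j. -/
import Mathlib


/-- In a finite monoid, some positive power of every element is idempotent. -/
lemma exists_idem_pow {M : Type*} [Monoid M] [Finite M] (x : M) :
    ∃ n, 0 < n ∧ (x ^ n) * (x ^ n) = x ^ n := by
  obtain ⟨i, j, hne, heq⟩ := Finite.exists_ne_map_eq_of_infinite (fun n : ℕ => x ^ n)
  wlog hij : i < j generalizing i j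
  · exact this j i hne.symm heq.symm (by omega)
  have hdpos : 0 < j - i := by omega
  have step : ∀ t, i ≤ t → x ^ (t + (j - i)) = x ^ t := by
    intro t ht
    obtain ⟨s, rfl⟩ := Nat.exists_eq_add_of_le ht
    have h1 : i + s + (j - i) = j + s := by omega
    rw [h1, pow_add, pow_add, ← heq]
  have steps : ∀ s t, i ≤ t → x ^ (t + s * (j - i)) = x ^ t := by
    intro s
    induction s with
    | zero => simp
    | succ k ih =>
      intro t ht
      have h1 : t + (k + 1) * (j - i) = (t + k * (j - i)) + (j - i) := by ring
      rw [h1, step _ (by omega), ih t ht]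
  refine ⟨(i + 1) * (j - i), by positivity, ?_⟩
  rw [← pow_add]
  exact steps (i + 1) ((i + 1) * (j - i)) (by nlinarith)

/-- In a chain ring, idempotents are trivial. -/
lemma idem_trivial {R : Type*} [Ring R]
    (hchain : ∀ I J : Ideal R, I ≤ J ∨ J ≤ I) (e : R) (he : e * e = e) :
    e = 0 ∨ e = 1 := by
  have hself : ∀ u : R, u ∈ Ideal.span {u} := fun u =>
    Ideal.mem_span_singleton'.mpr ⟨1, one_mul u⟩
  rcases hchain (Ideal.span {e}) (Ideal.span {(1 : R) - e}) with h | h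
  · left
    obtain ⟨c, hc⟩ := Ideal.mem_span_singleton'.mp (h (hself e))
    have h2 : c * (1 - e) * e = e * e := by rw [hc]
    rw [mul_assoc, sub_mul, one_mul, he, sub_self, mul_zero] at h2
    exact h2.symm
  · right
    obtain ⟨c, hc⟩ := Ideal.mem_span_singleton'.mp (h (hself (1 - e)))
    have h2 : c * e * e = (1 - e) * e := by rw [hc]
    rw [mul_assoc, he, hc, sub_mul, one_mul, he, sub_self] at h2
    have : (1 : R) - e = 0 := h2
    linear_combination (norm := noncomm_ring) -this

/-- Semi-commutativity consequence: in a finite chain ring, `m² = 0` implies `m·x·m = 0`. -/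
lemma semicomm {R : Type*} [Ring R] [Fintype R]
    (hchain : ∀ I J : Ideal R, I ≤ J ∨ J ≤ I) (m : R) (hm : m * m = 0) (x : R) :
    m * x * m = 0 := by
  have hself : ∀ u : R, u ∈ Ideal.span {u} := fun u =>
    Ideal.mem_span_singleton'.mpr ⟨1, one_mul u⟩
  have finish : m * x ∈ Ideal.span {m} → m * x * m = 0 := by
    intro hmem
    obtain ⟨s, hs⟩ := Ideal.mem_span_singleton'.mp hmem
    rw [← hs, mul_assoc, hm, mul_zero]
  rcases hchain (Ideal.span {m * x}) (Ideal.span {m}) with h | h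
  · exact finish (h (hself _))
  · obtain ⟨r, hr⟩ := Ideal.mem_span_singleton'.mp (h (hself m))
    have hiter : ∀ k, r ^ k * m * x ^ k = m := by
      intro k
      induction k with
      | zero => simp
      | succ k ih =>
        calc r ^ (k + 1) * m * x ^ (k + 1) = r * (r ^ k * m * x ^ k * x) := by
              rw [pow_succ' r, pow_succ x]; noncomm_ring
        _ = r * (m * x) := by rw [ih]
        _ = m := hr
    obtain ⟨n, hn, hidem⟩ := exists_idem_pow x
    rcases idem_trivial hchain _ hidem with h0 | h1
    · have hm0 : m = 0 := by rw [← hiter n, h0, mul_zero]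
      rw [hm0]; simp
    · -- x is a unit with inverse y = x ^ (n-1)
      set y := x ^ (n - 1) with hy
      have hxy : x * y = 1 := by
        rw [hy, ← pow_succ']
        have : n - 1 + 1 = n := by omega
        rw [this, h1]
      have hyx : y * x = 1 := by
        rw [hy, ← pow_succ]
        have : n - 1 + 1 = n := by omega
        rw [this, h1]
      have hsub : (Ideal.span {m} : Set R) ⊆ (Ideal.span {m * x} : Set R) := h
      have hmap : ∀ z ∈ (Ideal.span {m * x} : Set R), z * y ∈ (Ideal.span {m} : Set R) := by
        intro z hz
        obtain ⟨c, hc⟩ := Ideal.mem_span_singleton'.mp hz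
        refine Ideal.mem_span_singleton'.mpr ⟨c, ?_⟩
        rw [← hc, mul_assoc, mul_assoc, hxy, mul_one]
      have hinj : Set.InjOn (· * y) (Ideal.span {m * x} : Set R) := by
        intro a _ b _ hab
        have h2 := congrArg (· * x) hab
        simpa [mul_assoc, hyx] using h2
      have hcard : (Ideal.span {m * x} : Set R).ncard ≤ (Ideal.span {m} : Set R).ncard :=
        Set.ncard_le_ncard_of_injOn _ hmap hinj (Set.toFinite _)
      have heq : (Ideal.span {m} : Set R) = (Ideal.span {m * x} : Set R) :=
        Set.eq_of_subset_of_ncard_le hsub hcard (Set.toFinite _)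
      exact finish (by rw [show (Ideal.span {m} : Ideal R) = Ideal.span {m * x} from
        SetLike.coe_injective heq]; exact hself _)

lemma pow_expand {R : Type*} [Ring R] {m : R} (H : ∀ x, m * x * m = 0) (a : R) (j : ℕ) :
    (a + m) ^ j = a ^ j + ∑ r ∈ Finset.range j, a ^ r * m * a ^ (j - 1 - r) := by
  induction j with
  | zero => simp
  | succ k ih =>
    have hSm : (∑ r ∈ Finset.range k, a ^ r * m * a ^ (k - 1 - r)) * m = 0 := by
      rw [Finset.sum_mul]
      apply Finset.sum_eq_zero
      intro r _
      have h2 : m * (a ^ (k - 1 - r) * m) = 0 := by rw [← mul_assoc]; exact H _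
      simp [mul_assoc, h2]
    have hSa : (∑ r ∈ Finset.range k, a ^ r * m * a ^ (k - 1 - r)) * a
        = ∑ r ∈ Finset.range k, a ^ r * m * a ^ (k - r) := by
      rw [Finset.sum_mul]
      apply Finset.sum_congr rfl
      intro r hr
      rw [mul_assoc, ← pow_succ]
      have : k - 1 - r + 1 = k - r := by
        have := Finset.mem_range.mp hr; omega
      rw [this]
    calc (a + m) ^ (k + 1) = (a + m) ^ k * (a + m) := pow_succ _ _
      _ = (a ^ k + ∑ r ∈ Finset.range k, a ^ r * m * a ^ (k - 1 - r)) * (a + m) := by rw [ih]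
      _ = a ^ k * a + a ^ k * m
          + ((∑ r ∈ Finset.range k, a ^ r * m * a ^ (k - 1 - r)) * a
          + (∑ r ∈ Finset.range k, a ^ r * m * a ^ (k - 1 - r)) * m) := by noncomm_ring
      _ = a ^ (k + 1) + (∑ r ∈ Finset.range k, a ^ r * m * a ^ (k - r) + a ^ k * m) := by
          rw [hSm, hSa, ← pow_succ, add_zero]; abel
      _ = a ^ (k + 1) + ∑ r ∈ Finset.range (k + 1), a ^ r * m * a ^ (k - r) := by
          rw [Finset.sum_range_succ, Nat.sub_self, pow_zero, mul_one]
      _ = a ^ (k + 1) + ∑ r ∈ Finset.range (k + 1), a ^ r * m * a ^ (k + 1 - 1 - r) := by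
          simp

/-- The assigned function `λ_f(a,b) = Σ_{j≥1} Σ_{r=1}^j a_j a^{r-1} b a^{j-r}`. -/
noncomputable def lamPoly {R : Type*} [Ring R] (f : Polynomial R) (a b : R) : R :=
  f.sum fun j c => ∑ r ∈ Finset.range j, c * a ^ r * b * a ^ (j - 1 - r)

/-- In a finite chain ring, if `m² = 0` then `f(a + m) = f(a) + λ_f(a, m)`. -/
theorem eval_add_sq_zero_chain {R : Type*} [Ring R] [Fintype R]
    (hchain : ∀ I J : Ideal R, I ≤ J ∨ J ≤ I)
    (f : Polynomial R) (a m : R) (hm : m * m = 0) :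
    Polynomial.eval (a + m) f = Polynomial.eval a f + lamPoly f a m := by
  have H : ∀ x, m * x * m = 0 := semicomm hchain m hm
  rw [Polynomial.eval_eq_sum, Polynomial.eval_eq_sum, lamPoly,
    Polynomial.sum_def, Polynomial.sum_def, Polynomial.sum_def, ← Finset.sum_add_distrib]
  apply Finset.sum_congr rfl
  intro n _
  rw [pow_expand H a n, mul_add, Finset.mul_sum]
  congr 1
  apply Finset.sum_congr rfl
  intro r _
  noncomm_ring
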